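/- Let k ≥ 1, let G = (V,E) be a finite simple graph, and let c : S → [k] be a partial coloring of G such that there exist two vertices u, v ∈ S with c(u) ≠ c(v). Define the graph G' on the vertex set V ⊔ E in which: any two distinct vertices of the V-part are adjacent (the V-part is a clique), each vertex e of the E-part is adjacent exactly to the two endpoints of e in the V-part, and no two vertices of the E-part are adjacent. Let c' be the partial coloring of G' that assigns c(x) to the copy of each x ∈ S and leaves all other vertices uncolored. Then for every natural number ℓ: there exists an extension of c to a full k-coloring of G making at least ℓ edges of G happy if and only if there exists an extension of c' to a full k-coloring of G' making at least ℓ vertices of G' happy. -/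

import Mathlib

open Finset
open scoped Classical

/-- The number of happy edges of a graph `G` under a full coloring `c`. -/
noncomputable def happyEdgeCount {V : Type*} [Fintype V] {k : ℕ}
    (G : SimpleGraph V) (c : V → Fin k) : ℕ :=
  (G.edgeFinset.filter (fun e => ∀ x ∈ e, ∀ y ∈ e, c x = c y)).card

/-- The number of happy vertices of a graph `G` under a full coloring `c`:
a vertex is happy when it and all of its neighbors share one color. -/
noncomputable def happyVertexCount {V : Type*} [Fintype V] {k : ℕ}
    (G : SimpleGraph V) (c : V → Fin k) : ℕ :=
  (Finset.univ.filter (fun v => ∀ u, G.Adj v u → c u = c v)).card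

/-- The split graph `G'` on `V ⊔ E`: the `V`-part forms a clique, each edge-vertex is adjacent
exactly to its two endpoints in the `V`-part, and the `E`-part is an independent set. -/
def splitGraphOf {V : Type*} (G : SimpleGraph V) : SimpleGraph (V ⊕ ↥G.edgeSet) :=
  SimpleGraph.fromRel (fun x y =>
    match x, y with
    | Sum.inl _, Sum.inl _ => True
    | Sum.inl u, Sum.inr e => u ∈ (e : Sym2 V)
    | _, _ => False)

/-- If a partial coloring `c : S → [k]` of a graph `G` uses at least two
distinct colors, then for every `ℓ`, `c` extends to a full coloring of `G` with at least `ℓ`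
happy edges iff the induced partial coloring of the split graph `G'` extends to a full coloring
of `G'` with at least `ℓ` happy vertices. -/
lemma split_adj_inl_inl {V : Type*} {G : SimpleGraph V} {x y : V} :
    (splitGraphOf G).Adj (Sum.inl x) (Sum.inl y) ↔ x ≠ y := by
  simp [splitGraphOf]

lemma split_adj_inr_inl {V : Type*} {G : SimpleGraph V} {e : G.edgeSet} {x : V} :
    (splitGraphOf G).Adj (Sum.inr e) (Sum.inl x) ↔ x ∈ (e : Sym2 V) := by
  simp [splitGraphOf]

lemma split_adj_inr_inr {V : Type*} {G : SimpleGraph V} {e e' : G.edgeSet} :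
    ¬ (splitGraphOf G).Adj (Sum.inr e) (Sum.inr e') := by
  simp [splitGraphOf]

theorem stmt3 {V : Type*} [Fintype V] (k : ℕ) (hk : 1 ≤ k)
    (G : SimpleGraph V) (S : Finset V) (c : V → Fin k)
    (u v : V) (hu : u ∈ S) (hv : v ∈ S) (hcuv : c u ≠ c v) (ℓ : ℕ) :
    (∃ c₁ : V → Fin k, (∀ x ∈ S, c₁ x = c x) ∧ ℓ ≤ happyEdgeCount G c₁) ↔
    (∃ c₂ : V ⊕ ↥G.edgeSet → Fin k, (∀ x ∈ S, c₂ (Sum.inl x) = c x) ∧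
      ℓ ≤ happyVertexCount (splitGraphOf G) c₂) := by
  have huv : u ≠ v := fun h => hcuv (by rw [h])
  constructor
  · rintro ⟨c₁, hc₁, hℓ⟩
    refine ⟨Sum.elim c₁ (fun e => c₁ (Quot.out (e : Sym2 V)).1),
      fun x hx => hc₁ x hx, hℓ.trans ?_⟩
    unfold happyEdgeCount happyVertexCount
    apply Finset.card_le_card_of_injOn
      (fun e => if h : e ∈ G.edgeSet then Sum.inr ⟨e, h⟩ else Sum.inl u)
    · intro e he
      simp only [Finset.mem_coe, Finset.mem_filter, SimpleGraph.mem_edgeFinset] at he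
      obtain ⟨heE, hhap⟩ := he
      simp only [dif_pos heE]
      simp only [Finset.mem_coe, Finset.mem_filter, Finset.mem_univ, true_and]
      intro a ha
      cases a with
      | inl x =>
          have hx : x ∈ e := split_adj_inr_inl.mp ha
          exact hhap x hx _ (Sym2.out_fst_mem e)
      | inr e' => exact absurd ha split_adj_inr_inr
    · intro e he e' he' hee'
      simp only [Finset.mem_coe, Finset.mem_filter, SimpleGraph.mem_edgeFinset] at he he'
      simp only [dif_pos he.1, dif_pos he'.1] at hee'
      exact Subtype.mk_eq_mk.mp (Sum.inr_injective hee')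
  · rintro ⟨c₂, hc₂, hℓ⟩
    refine ⟨fun x => c₂ (Sum.inl x), fun x hx => hc₂ x hx, hℓ.trans ?_⟩
    unfold happyEdgeCount happyVertexCount
    have hnoV : ∀ x : V, ¬ (∀ a, (splitGraphOf G).Adj (Sum.inl x) a → c₂ a = c₂ (Sum.inl x)) := by
      intro x hx
      by_cases hxu : x = u
      · have := hx (Sum.inl v) (split_adj_inl_inl.mpr (hxu ▸ huv))
        exact hcuv (by rw [← hc₂ u hu, ← hc₂ v hv, this, hxu])
      · have h1 := hx (Sum.inl u) (split_adj_inl_inl.mpr (Ne.symm (fun h => hxu h.symm)))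
        by_cases hxv : x = v
        · exact hcuv (by rw [← hc₂ u hu, ← hc₂ v hv, h1, hxv])
        · have h2 := hx (Sum.inl v) (split_adj_inl_inl.mpr hxv)
          exact hcuv (by rw [← hc₂ u hu, ← hc₂ v hv, h1, h2])
    apply Finset.card_le_card_of_injOn
      (fun a => match a with | Sum.inl x => s(x, x) | Sum.inr e => (e : Sym2 V))
    · intro a ha
      simp only [Finset.mem_coe, Finset.mem_filter, Finset.mem_univ, true_and] at ha
      cases a with
      | inl x => exact absurd ha (hnoV x)
      | inr e =>
          simp only [Finset.mem_coe, Finset.mem_filter, SimpleGraph.mem_edgeFinset]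
          refine ⟨e.2, ?_⟩
          intro x hx y hy
          have h1 := ha (Sum.inl x) (split_adj_inr_inl.mpr hx)
          have h2 := ha (Sum.inl y) (split_adj_inr_inl.mpr hy)
          rw [h1, h2]
    · intro a ha b hb hab
      simp only [Finset.mem_coe, Finset.mem_filter, Finset.mem_univ, true_and] at ha hb
      cases a with
      | inl x => exact absurd ha (hnoV x)
      | inr e =>
          cases b with
          | inl y => exact absurd hb (hnoV y)
          | inr e' => exact congrArg Sum.inr (Subtype.ext hab)
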